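/- Let T ∈ B(H) with Δ = T*T − I ≥ 0, N = [ran Δ]_{T*} of finite dimension n. For any tuple c = (c₀,...,c_{n−1}) of strictly positive reals, the sesquilinear form ⟨x,y⟩_c = Σ_{j=0}^{n−1} c_j ⟨Δ T^j x, T^j y⟩ defines an inner product (in particular a positive definite form) on N. -/

import Mathlib

open ContinuousLinearMap

/-- The smallest closed `A`-invariant subspace containing the range of `Δ`. -/
noncomputable def invSpan {H : Type*} [NormedAddCommGroup H] [InnerProductSpace ℂ H]
    (A Δ : H →L[ℂ] H) : Submodule ℂ H :=
  (Submodule.span ℂ (⋃ n : ℕ, ⇑(A ^ n) '' Set.range ⇑Δ)).topologicalClosure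

section Aux

variable {H : Type*} [NormedAddCommGroup H] [InnerProductSpace ℂ H]

/-- If `D` is a positive operator and `re ⟪D y, y⟫ = 0` then `D y = 0`. -/
lemma isPositive_apply_eq_zero [CompleteSpace H] {D : H →L[ℂ] H} (hD : D.IsPositive) {y : H}
    (h : (inner ℂ (D y) y : ℂ).re = 0) : D y = 0 := by
  have hadj : ∀ u v : H, (inner ℂ (D u) v : ℂ) = inner ℂ u (D v) := by
    intro u v
    have hsa := hD.isSelfAdjoint
    rw [ContinuousLinearMap.isSelfAdjoint_iff'] at hsa
    conv_lhs => rw [← hsa]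
    rw [ContinuousLinearMap.adjoint_inner_left]
  set a : ℝ := (inner ℂ (D (D y)) (D y) : ℂ).re with ha_def
  set b : ℝ := ‖D y‖ ^ 2 with hb_def
  have ha : 0 ≤ a := by
    have := hD.2 (D y)
    simpa [ContinuousLinearMap.reApplyInnerSelf, ha_def] using this
  have key : ∀ t : ℝ, 0 ≤ a * t ^ 2 + 2 * b * t := by
    intro t
    have h0 := hD.2 (y + (t : ℂ) • D y)
    rw [ContinuousLinearMap.reApplyInnerSelf_apply] at h0
    have hDe : D (y + (t : ℂ) • D y) = D y + (t : ℂ) • D (D y) := by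
      rw [map_add, map_smul]
    rw [hDe] at h0
    have hexp : (inner ℂ (D y + (t : ℂ) • D (D y)) (y + (t : ℂ) • D y) : ℂ)
        = inner ℂ (D y) y + (t : ℂ) * inner ℂ (D y) (D y)
          + (t : ℂ) * inner ℂ (D (D y)) y + (t : ℂ) * (t : ℂ) * inner ℂ (D (D y)) (D y) := by
      rw [inner_add_left, inner_add_right, inner_add_right, inner_smul_left, inner_smul_right,
        inner_smul_left, inner_smul_right, Complex.conj_ofReal]
      ring
    have hDDy : (inner ℂ (D (D y)) y : ℂ) = inner ℂ (D y) (D y) := by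
      rw [hadj (D y) y]
    have hreDD : (inner ℂ (D y) (D y) : ℂ).re = b := by
      rw [hb_def, inner_self_eq_norm_sq_to_K]
      norm_cast
    have himDD : (inner ℂ (D y) (D y) : ℂ).im = 0 := by
      rw [inner_self_eq_norm_sq_to_K]
      norm_cast
    rw [hexp, hDDy] at h0
    have hre : RCLike.re ((inner ℂ (D y) y : ℂ) + (t : ℂ) * inner ℂ (D y) (D y)
        + (t : ℂ) * inner ℂ (D y) (D y) + (t : ℂ) * (t : ℂ) * inner ℂ (D (D y)) (D y)) =
        (inner ℂ (D y) y : ℂ).re + t * b + t * b + t * t * a := by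
      simp only [RCLike.re_to_complex, Complex.add_re, Complex.mul_re, Complex.ofReal_re,
        Complex.ofReal_im, Complex.mul_im, hreDD, himDD, ha_def]
      ring
    rw [hre, h] at h0
    nlinarith [h0]
  have hb : b = 0 := by
    have hb0 : 0 ≤ b := by positivity
    by_contra hne
    have hbpos : 0 < b := lt_of_le_of_ne hb0 (Ne.symm hne)
    have hapos : 0 < a + 1 := by linarith
    set s : ℝ := b / (a + 1) with hs_def
    have hs : 0 < s := div_pos hbpos hapos
    have ht := key (-s)
    have has : a * s ≤ b := by
      rw [hs_def, mul_comm, div_mul_eq_mul_div, div_le_iff₀ hapos]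
      nlinarith
    nlinarith [mul_le_mul_of_nonneg_right has hs.le, mul_pos hs hbpos]
  have : ‖D y‖ = 0 := by
    have := hb
    rw [hb_def] at this
    nlinarith [norm_nonneg (D y)]
  simpa using norm_eq_zero.mp this

variable (A D : H →L[ℂ] H)

/-- The span of the images `A^j '' range D` for `j ≤ k`. -/
noncomputable def MK (k : ℕ) : Submodule ℂ H :=
  Submodule.span ℂ (⋃ j ∈ Set.Iic k, ⇑(A ^ j) '' Set.range ⇑D)

lemma MK_mono {k l : ℕ} (h : k ≤ l) : MK A D k ≤ MK A D l :=
  Submodule.span_mono <| Set.biUnion_subset_biUnion_left fun _ hj => le_trans hj h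

lemma gen_mem_MK {j k : ℕ} (hj : j ≤ k) (z : H) : (A ^ j) (D z) ∈ MK A D k :=
  Submodule.subset_span <| Set.mem_biUnion hj ⟨D z, ⟨z, rfl⟩, rfl⟩

lemma MK_succ_le (k : ℕ) : MK A D (k + 1) ≤ MK A D k ⊔ Submodule.map (A : H →ₗ[ℂ] H) (MK A D k) := by
  rw [MK, Submodule.span_le]
  rintro _ hy
  obtain ⟨j, hj, ⟨_, ⟨z, rfl⟩, rfl⟩⟩ := Set.mem_iUnion₂.mp hy
  rcases Nat.lt_or_ge j (k + 1) with hlt | hge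
  · exact Submodule.mem_sup_left (gen_mem_MK A D (Nat.lt_succ_iff.mp hlt) z)
  · have hj' : j = k + 1 := le_antisymm hj hge
    subst hj'
    have : (A ^ (k + 1)) (D z) = A ((A ^ k) (D z)) := by
      rw [pow_succ']
      rfl
    rw [this]
    exact Submodule.mem_sup_right ⟨_, gen_mem_MK A D le_rfl z, rfl⟩

lemma MK_stab {k : ℕ} (h : MK A D (k + 1) ≤ MK A D k) :
    ∀ m, MK A D (k + m) ≤ MK A D k := by
  intro m
  induction m with
  | zero => exact le_rfl
  | succ m ih =>
    have h1 : MK A D (k + m + 1) ≤ MK A D (k + m) ⊔ Submodule.map (A : H →ₗ[ℂ] H) (MK A D (k + m)) :=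
      MK_succ_le A D (k + m)
    have h2 : Submodule.map (A : H →ₗ[ℂ] H) (MK A D (k + m)) ≤ Submodule.map (A : H →ₗ[ℂ] H) (MK A D k) :=
      Submodule.map_mono ih
    have h3 : Submodule.map (A : H →ₗ[ℂ] H) (MK A D k) ≤ MK A D (k + 1) := by
      rw [Submodule.map_le_iff_le_comap, MK, Submodule.span_le]
      rintro _ hy
      obtain ⟨j, hj, ⟨_, ⟨z, rfl⟩, rfl⟩⟩ := Set.mem_iUnion₂.mp hy
      have : A ((A ^ j) (D z)) = (A ^ (j + 1)) (D z) := by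
        rw [pow_succ']
        rfl
      simp only [SetLike.mem_coe, Submodule.mem_comap, ContinuousLinearMap.coe_coe]
      rw [this]
      exact gen_mem_MK A D (Nat.succ_le_succ (Set.mem_Iic.mp hj)) z
    have h4 : MK A D (k + (m + 1)) ≤ MK A D k ⊔ MK A D k := by
      calc MK A D (k + m + 1) ≤ MK A D (k + m) ⊔ Submodule.map (A : H →ₗ[ℂ] H) (MK A D (k + m)) := h1
        _ ≤ MK A D k ⊔ MK A D k := sup_le_sup ih ((h2.trans h3).trans h)
    exact h4.trans (sup_le le_rfl le_rfl)

lemma span_all_le_MK {k : ℕ} (h : MK A D (k + 1) ≤ MK A D k) :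
    Submodule.span ℂ (⋃ n : ℕ, ⇑(A ^ n) '' Set.range ⇑D) ≤ MK A D k := by
  rw [Submodule.span_le]
  rintro _ hy
  obtain ⟨j, ⟨_, ⟨z, rfl⟩, rfl⟩⟩ := Set.mem_iUnion.mp hy
  rcases le_or_gt j k with hj | hj
  · exact gen_mem_MK A D hj z
  · have : (A ^ j) (D z) ∈ MK A D j := gen_mem_MK A D le_rfl z
    exact MK_stab A D h (j - k) (by rwa [Nat.add_sub_cancel' hj.le])

lemma MK_le_invSpan (k : ℕ) : MK A D k ≤ invSpan A D := by
  refine le_trans ?_ (Submodule.le_topologicalClosure _)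
  rw [MK, Submodule.span_le]
  rintro _ hy
  obtain ⟨j, _, ⟨_, ⟨z, rfl⟩, rfl⟩⟩ := Set.mem_iUnion₂.mp hy
  exact Submodule.subset_span <| Set.mem_iUnion.mpr ⟨j, ⟨D z, ⟨z, rfl⟩, rfl⟩⟩

end Aux

set_option maxHeartbeats 1000000 in
theorem stmt10 {H : Type*} [NormedAddCommGroup H] [InnerProductSpace ℂ H] [CompleteSpace H]
    (n : ℕ) (T : H →L[ℂ] H) (hpos : (adjoint T ∘L T - 1).IsPositive)
    (hfin : FiniteDimensional ℂ (invSpan (adjoint T) (adjoint T ∘L T - 1)))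
    (hdim : Module.finrank ℂ (invSpan (adjoint T) (adjoint T ∘L T - 1)) = n)
    (c : Fin n → ℝ) (hc : ∀ j, 0 < c j) :
    (∀ x : H, 0 ≤ ∑ j : Fin n, c j *
        ((inner ℂ ((adjoint T ∘L T - 1) ((T ^ (j : ℕ)) x)) ((T ^ (j : ℕ)) x) : ℂ)).re) ∧
      ∀ x ∈ invSpan (adjoint T) (adjoint T ∘L T - 1),
        (∑ j : Fin n, c j *
          ((inner ℂ ((adjoint T ∘L T - 1) ((T ^ (j : ℕ)) x)) ((T ^ (j : ℕ)) x) : ℂ)).re) = 0 →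
        x = 0 := by
  set D : H →L[ℂ] H := adjoint T ∘L T - 1 with hD_def
  set A : H →L[ℂ] H := adjoint T with hA_def
  have hterm_nonneg : ∀ (x : H) (j : ℕ), 0 ≤ (inner ℂ (D ((T ^ j) x)) ((T ^ j) x) : ℂ).re := by
    intro x j
    have := hpos.2 ((T ^ j) x)
    simpa [ContinuousLinearMap.reApplyInnerSelf] using this
  constructor
  · intro x
    refine Finset.sum_nonneg fun j _ => mul_nonneg (hc j).le (hterm_nonneg x j)
  · intro x hx hsum
    -- every term vanishes
    have hterm : ∀ j : Fin n, (inner ℂ (D ((T ^ (j : ℕ)) x)) ((T ^ (j : ℕ)) x) : ℂ).re = 0 := by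
      intro j
      have hall := (Finset.sum_eq_zero_iff_of_nonneg
        (fun j _ => mul_nonneg (hc j).le (hterm_nonneg x j))).mp hsum j (Finset.mem_univ j)
      have := hc j
      nlinarith [hterm_nonneg x (j : ℕ)]
    have hzero : ∀ j : ℕ, j < n → D ((T ^ j) x) = 0 := fun j hj =>
      isPositive_apply_eq_zero hpos (hterm ⟨j, hj⟩)
    -- dispatch n = 0
    rcases Nat.eq_zero_or_pos n with hn0 | hnpos
    · subst hn0
      have : invSpan A D = ⊥ := Submodule.finrank_eq_zero.mp hdim
      rw [this] at hx
      simpa using hx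
    obtain ⟨m, rfl⟩ : ∃ m, n = m + 1 := ⟨n - 1, by omega⟩
    -- finite dimensionality of the MK chain
    have hfinMK : ∀ k, FiniteDimensional ℂ (MK A D k) := fun k =>
      Submodule.finiteDimensional_of_le (MK_le_invSpan A D k)
    -- invSpan ≤ MK m
    have hNle : invSpan A D ≤ MK A D m := by
      by_cases hEx : ∃ k ≤ m, MK A D (k + 1) ≤ MK A D k
      · obtain ⟨k, hk, hstab⟩ := hEx
        have h1 : Submodule.span ℂ (⋃ n : ℕ, ⇑(A ^ n) '' Set.range ⇑D) ≤ MK A D k :=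
          span_all_le_MK A D hstab
        have hclosed : IsClosed (MK A D k : Set H) :=
          haveI := hfinMK k
          Submodule.closed_of_finiteDimensional _
        have h2 : invSpan A D ≤ MK A D k :=
          Submodule.topologicalClosure_minimal _ h1 hclosed
        exact h2.trans (MK_mono A D hk)
      · exfalso
        push_neg at hEx
        have hstrict : ∀ k ≤ m, MK A D k < MK A D (k + 1) := fun k hk =>
          lt_of_le_of_ne (MK_mono A D (Nat.le_succ k))
            (fun h => hEx k hk (le_of_eq h.symm))
        have hrank : ∀ k ≤ m + 1,
            Module.finrank ℂ (MK A D 0) + k ≤ Module.finrank ℂ (MK A D k) := by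
          intro k hk
          induction k with
          | zero => simp
          | succ k ih =>
            have hk' : k ≤ m := by omega
            have h1 := ih (by omega)
            have h2 : Module.finrank ℂ (MK A D k) < Module.finrank ℂ (MK A D (k + 1)) :=
              haveI := hfinMK (k + 1)
              Submodule.finrank_lt_finrank_of_lt (hstrict k hk')
            omega
        have hle : Module.finrank ℂ (MK A D (m + 1)) ≤ m + 1 :=
          le_trans (Submodule.finrank_mono (MK_le_invSpan A D (m + 1))) (le_of_eq hdim)
        have h0 : Module.finrank ℂ (MK A D 0) = 0 := by
          have := hrank (m + 1) le_rfl
          omega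
        have hbot : MK A D 0 = ⊥ :=
          haveI := hfinMK 0
          Submodule.finrank_eq_zero.mp h0
        have hDzero : ∀ z : H, D z = 0 := by
          intro z
          have : (A ^ 0) (D z) ∈ MK A D 0 := gen_mem_MK A D le_rfl z
          rw [hbot] at this
          simpa using this
        have h01 : MK A D 1 ≤ MK A D 0 := by
          rw [MK, Submodule.span_le]
          rintro _ hy
          obtain ⟨j, _, ⟨_, ⟨z, rfl⟩, rfl⟩⟩ := Set.mem_iUnion₂.mp hy
          rw [hDzero z]
          simp [Submodule.zero_mem]
        exact hEx 0 (by omega) h01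
    -- x is orthogonal to all of MK m, which contains x
    have hxMK : x ∈ MK A D m := hNle hx
    have horth : ∀ y ∈ MK A D m, (inner ℂ y x : ℂ) = 0 := by
      intro y hy
      induction hy using Submodule.span_induction with
      | mem y hy =>
        obtain ⟨j, hj, ⟨_, ⟨z, rfl⟩, rfl⟩⟩ := Set.mem_iUnion₂.mp hy
        have hAadj : A ^ j = adjoint (T ^ j) := by
          rw [hA_def, ← ContinuousLinearMap.star_eq_adjoint, ← ContinuousLinearMap.star_eq_adjoint,
            ← star_pow]
        rw [hAadj, ContinuousLinearMap.adjoint_inner_left]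
        have hDadj : (inner ℂ (D z) ((T ^ j) x) : ℂ) = inner ℂ z (D ((T ^ j) x)) := by
          have hsa := hpos.isSelfAdjoint
          rw [ContinuousLinearMap.isSelfAdjoint_iff'] at hsa
          conv_lhs => rw [← hsa]
          rw [ContinuousLinearMap.adjoint_inner_left]
        rw [hDadj, hzero j (Nat.lt_succ_of_le (Set.mem_Iic.mp hj))]
        simp
      | zero => simp
      | add y₁ y₂ _ _ h1 h2 => rw [inner_add_left, h1, h2, add_zero]
      | smul a y _ h1 => rw [inner_smul_left, h1, mul_zero]
    have : (inner ℂ x x : ℂ) = 0 := horth x hxMK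
    exact inner_self_eq_zero.mp this
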